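/- For every σ ∈ 𝔓_n and every i ∈ {1, …, n}, there exists an element v ∈ 𝕃_n such that θ(σ)(x_i) = [x_i, v]. -/

import Mathlib

/-! Drinfeld–Kohno Lie algebra and the infinitesimal braid action. -/

open FreeLieAlgebra

/-- The free Lie algebra `𝕃_n` on generators `x_1, …, x_n`. -/
abbrev FreeLie (K : Type*) [Field K] (n : ℕ) := FreeLieAlgebra K (Fin n)

/-- Index type for the generators `A_{i,j}` (`i ≠ j`) of the Drinfeld–Kohno Lie algebra. -/
abbrev DKGenIdx (n : ℕ) := {p : Fin n × Fin n // p.1 ≠ p.2}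

/-- The set of infinitesimal braid relations inside the free Lie algebra on the `A_{i,j}`. -/
def dkRels (K : Type*) [Field K] (n : ℕ) : Set (FreeLieAlgebra K (DKGenIdx n)) :=
  (⋃ (i : Fin n) (j : Fin n) (h : i ≠ j),
      {of K (⟨(i, j), h⟩ : DKGenIdx n) - of K (⟨(j, i), h.symm⟩ : DKGenIdx n)}) ∪
  (⋃ (i : Fin n) (j : Fin n) (k : Fin n) (hij : i ≠ j) (hjk : j ≠ k) (hik : i ≠ k),
      {⁅of K (⟨(i, k), hik⟩ : DKGenIdx n),
        of K (⟨(i, j), hij⟩ : DKGenIdx n) + of K (⟨(j, k), hjk⟩ : DKGenIdx n)⁆}) ∪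
  (⋃ (i : Fin n) (j : Fin n) (k : Fin n) (l : Fin n)
      (hij : i ≠ j) (hkl : k ≠ l) (_ : i ≠ k) (_ : i ≠ l) (_ : j ≠ k) (_ : j ≠ l),
      {⁅of K (⟨(i, j), hij⟩ : DKGenIdx n), of K (⟨(k, l), hkl⟩ : DKGenIdx n)⁆})

/-- The Lie ideal generated by the infinitesimal braid relations. -/
noncomputable def dkIdeal (K : Type*) [Field K] (n : ℕ) : LieIdeal K (FreeLieAlgebra K (DKGenIdx n)) :=
  LieSubmodule.lieSpan K _ (dkRels K n)

/-- The Drinfeld–Kohno Lie algebra `𝔓_n`. -/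
abbrev DK (K : Type*) [Field K] (n : ℕ) :=
  FreeLieAlgebra K (DKGenIdx n) ⧸ dkIdeal K n

/-- The generator `A_{i,j}` of the Drinfeld–Kohno Lie algebra `𝔓_n`. -/
noncomputable def dkGen (K : Type*) [Field K] {n : ℕ} {i j : Fin n} (h : i ≠ j) : DK K n :=
  LieSubmodule.Quotient.mk (N := dkIdeal K n) (of K (⟨(i, j), h⟩ : DKGenIdx n))

/-- For every `σ ∈ 𝔓_n` and every generator `x_i` of `𝕃_n`,
there exists `v ∈ 𝕃_n` with `θ(σ)(x_i) = [x_i, v]`. -/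
theorem infinitesimal_braid_action_apply_gen (K : Type*) [Field K] (n : ℕ) (hn : 2 ≤ n)
    (θ : DK K n →ₗ⁅K⁆ LieDerivation K (FreeLie K n) (FreeLie K n))
    (hθ : ∀ (i j : Fin n) (h : i ≠ j) (k : Fin n),
      θ (dkGen K h) (of K k) =
        if k = i then ⁅of K i, of K j⁆
        else if k = j then ⁅of K j, of K i⁆
        else 0) :
    ∀ (σ : DK K n) (i : Fin n), ∃ v : FreeLie K n, θ σ (of K i) = ⁅of K i, v⁆ := by
  intro σ i
  -- The set of σ satisfying the conclusion is a Lie subalgebra.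
  let S : LieSubalgebra K (DK K n) :=
    { carrier := {σ | ∃ v : FreeLie K n, θ σ (of K i) = ⁅of K i, v⁆}
      add_mem' := by
        rintro a b ⟨v, hv⟩ ⟨w, hw⟩
        exact ⟨v + w, by simp [hv, hw]⟩
      zero_mem' := ⟨0, by simp⟩
      smul_mem' := by
        rintro c a ⟨v, hv⟩
        exact ⟨c • v, by simp [hv, ← lie_smul]⟩
      lie_mem' := by
        rintro a b ⟨v, hv⟩ ⟨w, hw⟩
        refine ⟨⁅v, w⁆ + ((θ a) w - (θ b) v), ?_⟩
        have h1 : θ ⁅a, b⁆ (of K i) = (θ a) ((θ b) (of K i)) - (θ b) ((θ a) (of K i)) := by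
          rw [LieHom.map_lie, LieDerivation.lie_apply]
        rw [h1, hv, hw, LieDerivation.apply_lie_eq_add, LieDerivation.apply_lie_eq_add,
          hv, hw, lie_add, lie_sub, lie_lie (of K i) v w, ← lie_skew ⁅of K i, w⁆ v]
        abel }
  -- Every generator `A_{p.1, p.2}` belongs to `S`.
  have hgen : ∀ p : DKGenIdx n,
      (LieSubmodule.Quotient.mk (N := dkIdeal K n) (of K p) : DK K n) ∈ S := by
    rintro ⟨⟨j, k⟩, h⟩
    have := hθ j k h i
    have hq : (LieSubmodule.Quotient.mk (N := dkIdeal K n)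
        (of K (⟨(j, k), h⟩ : DKGenIdx n)) : DK K n) = dkGen K h := rfl
    by_cases hij : i = j
    · subst hij
      exact ⟨of K k, by rw [hq, this]; simp⟩
    · by_cases hik : i = k
      · subst hik
        refine ⟨of K j, ?_⟩
        rw [hq, this]
        simp [hij]
      · refine ⟨0, ?_⟩
        rw [hq, this]
        simp [hij, hik]
  -- The quotient map as a Lie algebra homomorphism.
  let mkHom : FreeLieAlgebra K (DKGenIdx n) →ₗ⁅K⁆ DK K n :=
    { (dkIdeal K n).toSubmodule.mkQ with
      toFun := LieSubmodule.Quotient.mk (N := dkIdeal K n)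
      map_lie' := fun {_ _} => rfl }
  -- Factor the quotient map through `S` using the universal property.
  let f : DKGenIdx n → S := fun p => ⟨_, hgen p⟩
  have hfac : mkHom = S.incl.comp (lift K f) := by
    apply FreeLieAlgebra.hom_ext
    intro p
    show LieSubmodule.Quotient.mk (of K p) = S.incl (lift K f (of K p))
    rw [lift_of_apply]
    rfl
  obtain ⟨x, hx⟩ := LieSubmodule.Quotient.surjective_mk' (dkIdeal K n) σ
  have hσ : σ ∈ S := by
    have : mkHom x = σ := hx
    rw [hfac] at this
    rw [← this]
    exact (lift K f x).2
  exact hσ
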